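/- arXiv:2105.00151 — 2 statements merged into one kernel-verified Lean document; each statement's English description precedes it below -/
import Mathlib

section
/- Let Ω ⊆ ℝ² be a nonempty compact convex set and C ⊆ Ω a nonempty compact set. Then the Lebesgue measure of {(θ,ρ) ∈ [0,2π) × ℝ : R(θ,ρ) ∩ C = ∅ ∧ G(θ,ρ) ∩ Ω ≠ ∅} equals P(Ω) − P(C). (Measure form of Eq. (3) of the paper / Theorem 2: the measure of disaster half-planes that miss C while the boundary line meets Ω equals ℒ(Ω) − ℒ(conv C).) -/
open MeasureTheory Real Set
open scoped InnerProductSpace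

noncomputable def u (θ : ℝ) : EuclideanSpace ℝ (Fin 2) :=
  WithLp.toLp 2 ![Real.cos θ, Real.sin θ]

/-- The (directed) line with normal direction `u θ` at signed distance `ρ`. -/
def G (θ ρ : ℝ) : Set (EuclideanSpace ℝ (Fin 2)) :=
  {x | ⟪x, u θ⟫_ℝ = ρ}

/-- The disaster area: the closed half-plane to the `u θ` side of the line `G θ ρ`. -/
def R (θ ρ : ℝ) : Set (EuclideanSpace ℝ (Fin 2)) :=
  {x | ⟪x, u θ⟫_ℝ ≥ ρ}

/-- Support integral: integral of the support function over all directions;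
equals the perimeter of the convex hull. -/
noncomputable def P (X : Set (EuclideanSpace ℝ (Fin 2))) : ℝ :=
  ∫ θ in (0:ℝ)..(2 * Real.pi), sSup {r : ℝ | ∃ x ∈ X, r = ⟪x, u θ⟫_ℝ}

noncomputable def hsup (X : Set (EuclideanSpace ℝ (Fin 2))) (θ : ℝ) : ℝ :=
  sSup {r : ℝ | ∃ x ∈ X, r = ⟪x, u θ⟫_ℝ}

lemma sSet_eq (X : Set (EuclideanSpace ℝ (Fin 2))) (θ : ℝ) :
    {r : ℝ | ∃ x ∈ X, r = ⟪x, u θ⟫_ℝ} = (fun x => ⟪x, u θ⟫_ℝ) '' X := by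
  ext r; simp [eq_comm]

lemma continuous_inner_u (θ : ℝ) :
    Continuous (fun x : EuclideanSpace ℝ (Fin 2) => ⟪x, u θ⟫_ℝ) :=
  continuous_id.inner continuous_const

lemma continuous_u : Continuous u := by
  unfold u
  apply (PiLp.continuous_toLp 2 _).comp
  apply continuous_pi
  intro i
  fin_cases i
  · simpa [u] using Real.continuous_cos
  · simpa [u] using Real.continuous_sin

lemma bddAbove_img (X : Set (EuclideanSpace ℝ (Fin 2))) (hX : IsCompact X) (θ : ℝ) :
    BddAbove ((fun x => ⟪x, u θ⟫_ℝ) '' X) :=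
  (hX.image (continuous_inner_u θ)).bddAbove

lemma le_hsup (X : Set (EuclideanSpace ℝ (Fin 2))) (hX : IsCompact X) (θ : ℝ)
    {x} (hx : x ∈ X) : ⟪x, u θ⟫_ℝ ≤ hsup X θ := by
  rw [hsup, sSet_eq]
  exact le_csSup (bddAbove_img X hX θ) (mem_image_of_mem _ hx)

lemma hsup_mem (X : Set (EuclideanSpace ℝ (Fin 2))) (hX : IsCompact X)
    (hne : X.Nonempty) (θ : ℝ) : ∃ x ∈ X, hsup X θ = ⟪x, u θ⟫_ℝ := by
  have h := (hX.image (continuous_inner_u θ)).sSup_mem (hne.image _)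
  rw [hsup, sSet_eq]
  obtain ⟨x, hx, hxe⟩ := h
  exact ⟨x, hx, hxe.symm⟩

lemma hsup_continuous (X : Set (EuclideanSpace ℝ (Fin 2))) (hX : IsCompact X)
    (hne : X.Nonempty) : Continuous (hsup X) := by
  obtain ⟨M, hM⟩ := isBounded_iff_forall_norm_le.mp hX.isBounded
  obtain ⟨x₀, hx₀⟩ := id hne
  have hM0 : 0 ≤ M := le_trans (norm_nonneg x₀) (hM x₀ hx₀)
  set H : EuclideanSpace ℝ (Fin 2) → ℝ := fun v => sSup ((fun x => ⟪x, v⟫_ℝ) '' X) with hH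
  have key : ∀ v w : EuclideanSpace ℝ (Fin 2), H v ≤ H w + M * ‖v - w‖ := by
    intro v w
    apply csSup_le (hne.image _)
    rintro r ⟨x, hx, rfl⟩
    have h1 : ⟪x, v⟫_ℝ = ⟪x, w⟫_ℝ + ⟪x, v - w⟫_ℝ := by
      rw [inner_sub_right]; ring
    have h2 : ⟪x, w⟫_ℝ ≤ H w :=
      le_csSup ((hX.image (continuous_id.inner continuous_const)).bddAbove)
        (mem_image_of_mem _ hx)
    have h3 : ⟪x, v - w⟫_ℝ ≤ ‖x‖ * ‖v - w‖ := real_inner_le_norm x (v - w)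
    have h4 : ‖x‖ * ‖v - w‖ ≤ M * ‖v - w‖ :=
      mul_le_mul_of_nonneg_right (hM x hx) (norm_nonneg _)
    linarith
  have hlip : LipschitzWith (Real.toNNReal M) H := by
    apply LipschitzWith.of_dist_le_mul
    intro v w
    rw [Real.dist_eq, abs_sub_le_iff, dist_eq_norm]
    have hMc : (Real.toNNReal M : ℝ) = M := Real.coe_toNNReal M hM0
    constructor
    · have := key v w; rw [hMc]; linarith
    · have := key w v; rw [hMc, norm_sub_rev v w]; linarith
  have : hsup X = H ∘ u := by
    funext θ; simp only [hsup, Function.comp, hH, sSet_eq]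
  rw [this]
  exact hlip.continuous.comp continuous_u

lemma R_empty_iff (C : Set (EuclideanSpace ℝ (Fin 2))) (hCc : IsCompact C)
    (hCne : C.Nonempty) (θ ρ : ℝ) : R θ ρ ∩ C = ∅ ↔ hsup C θ < ρ := by
  constructor
  · intro h
    obtain ⟨x, hx, hxe⟩ := hsup_mem C hCc hCne θ
    rw [hxe]
    by_contra hcon
    push_neg at hcon
    exact absurd h (Set.Nonempty.ne_empty ⟨x, hcon, hx⟩)
  · intro h
    ext x
    simp only [mem_inter_iff, mem_empty_iff_false, iff_false, not_and, R, mem_setOf_eq]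
    intro hge hx
    exact absurd (le_hsup C hCc θ hx) (by simp only [ge_iff_le] at hge; linarith)

lemma image_eq_Icc (Ω : Set (EuclideanSpace ℝ (Fin 2))) (hΩc : IsCompact Ω)
    (hΩconv : Convex ℝ Ω) (hΩne : Ω.Nonempty) (θ : ℝ) :
    (fun x => ⟪x, u θ⟫_ℝ) '' Ω =
      Icc (sInf ((fun x => ⟪x, u θ⟫_ℝ) '' Ω)) (hsup Ω θ) := by
  have himg : (fun x => ⟪x, u θ⟫_ℝ) '' Ω = (fun x => ⟪u θ, x⟫_ℝ) '' Ω := by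
    simp only [real_inner_comm]
  have hconv : Convex ℝ ((fun x => ⟪x, u θ⟫_ℝ) '' Ω) := by
    rw [himg]
    exact hΩconv.linear_image (innerSL ℝ (u θ)).toLinearMap
  have hcpt : IsCompact ((fun x => ⟪x, u θ⟫_ℝ) '' Ω) := hΩc.image (continuous_inner_u θ)
  have hconn : IsConnected ((fun x => ⟪x, u θ⟫_ℝ) '' Ω) :=
    ⟨hΩne.image _, hconv.isPreconnected⟩
  rw [hsup, sSet_eq]
  exact eq_Icc_of_connected_compact hconn hcpt

lemma G_nonempty_iff (Ω : Set (EuclideanSpace ℝ (Fin 2))) (hΩc : IsCompact Ω)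
    (hΩconv : Convex ℝ Ω) (hΩne : Ω.Nonempty) (θ ρ : ℝ) :
    (G θ ρ ∩ Ω).Nonempty ↔
      ρ ∈ Icc (sInf ((fun x => ⟪x, u θ⟫_ℝ) '' Ω)) (hsup Ω θ) := by
  rw [← image_eq_Icc Ω hΩc hΩconv hΩne θ]
  constructor
  · rintro ⟨x, hxG, hxΩ⟩
    exact ⟨x, hxΩ, hxG⟩
  · rintro ⟨x, hxΩ, hxe⟩
    exact ⟨x, hxe, hxΩ⟩

lemma fiber_eq (Ω C : Set (EuclideanSpace ℝ (Fin 2)))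
    (hΩc : IsCompact Ω) (hΩconv : Convex ℝ Ω) (hΩne : Ω.Nonempty)
    (hCc : IsCompact C) (hCne : C.Nonempty) (hCΩ : C ⊆ Ω) (θ : ℝ) :
    {ρ : ℝ | R θ ρ ∩ C = ∅ ∧ (G θ ρ ∩ Ω).Nonempty} = Ioc (hsup C θ) (hsup Ω θ) := by
  obtain ⟨x₀, hx₀, hx₀e⟩ := hsup_mem C hCc hCne θ
  have hmle : sInf ((fun x => ⟪x, u θ⟫_ℝ) '' Ω) ≤ hsup C θ := by
    rw [hx₀e]
    exact csInf_le (hΩc.image (continuous_inner_u θ)).bddBelow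
      (mem_image_of_mem _ (hCΩ hx₀))
  ext ρ
  simp only [mem_setOf_eq, R_empty_iff C hCc hCne,
    G_nonempty_iff Ω hΩc hΩconv hΩne, mem_Icc, mem_Ioc]
  constructor
  · rintro ⟨h1, _, h3⟩; exact ⟨h1, h3⟩
  · rintro ⟨h1, h2⟩; exact ⟨h1, le_trans hmle h1.le, h2⟩

lemma hsup_mono (Ω C : Set (EuclideanSpace ℝ (Fin 2))) (hΩc : IsCompact Ω)
    (hCne : C.Nonempty) (hCΩ : C ⊆ Ω) (θ : ℝ) : hsup C θ ≤ hsup Ω θ := by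
  rw [hsup, hsup, sSet_eq, sSet_eq]
  exact csSup_le_csSup (bddAbove_img Ω hΩc θ) (hCne.image _) (image_mono hCΩ)


/-- Measure form of Eq. (3) of the paper: the measure of disaster half-planes missing `C`
while the boundary line meets `Ω` equals `ℒ(Ω) − ℒ(conv C)`. -/
theorem stmt_3 (Ω C : Set (EuclideanSpace ℝ (Fin 2)))
    (hΩc : IsCompact Ω) (hΩconv : Convex ℝ Ω) (hΩne : Ω.Nonempty)
    (hCc : IsCompact C) (hCne : C.Nonempty) (hCΩ : C ⊆ Ω) :
    volume {p : ℝ × ℝ | p ∈ Set.Ico 0 (2 * Real.pi) ×ˢ (Set.univ : Set ℝ) ∧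
        R p.1 p.2 ∩ C = ∅ ∧ (G p.1 p.2 ∩ Ω).Nonempty}
      = ENNReal.ofReal (P Ω - P C) := by
  have hCcont := hsup_continuous C hCc hCne
  have hΩcont := hsup_continuous Ω hΩc hΩne
  have hmono : ∀ θ, hsup C θ ≤ hsup Ω θ := hsup_mono Ω C hΩc hCne hCΩ
  set S : Set (ℝ × ℝ) :=
    {p : ℝ × ℝ | p.1 ∈ Ico (0:ℝ) (2 * Real.pi) ∧ p.2 ∈ Ioc (hsup C p.1) (hsup Ω p.1)}
    with hS
  have hSeq : {p : ℝ × ℝ | p ∈ Set.Ico 0 (2 * Real.pi) ×ˢ (Set.univ : Set ℝ) ∧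
      R p.1 p.2 ∩ C = ∅ ∧ (G p.1 p.2 ∩ Ω).Nonempty} = S := by
    ext p
    simp only [hS, mem_setOf_eq, mem_prod, mem_univ, and_true]
    rw [and_congr_right_iff]
    intro _
    exact Set.ext_iff.mp (fiber_eq Ω C hΩc hΩconv hΩne hCc hCne hCΩ p.1) p.2
  have hmeas : MeasurableSet S := by
    have h1 : MeasurableSet {p : ℝ × ℝ | p.1 ∈ Ico (0:ℝ) (2 * Real.pi)} :=
      measurable_fst measurableSet_Ico
    have h2 : MeasurableSet {p : ℝ × ℝ | hsup C p.1 < p.2} :=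
      measurableSet_lt (hCcont.measurable.comp measurable_fst) measurable_snd
    have h3 : MeasurableSet {p : ℝ × ℝ | p.2 ≤ hsup Ω p.1} :=
      measurableSet_le measurable_snd (hΩcont.measurable.comp measurable_fst)
    have : S = {p : ℝ × ℝ | p.1 ∈ Ico (0:ℝ) (2 * Real.pi)} ∩
        ({p : ℝ × ℝ | hsup C p.1 < p.2} ∩ {p : ℝ × ℝ | p.2 ≤ hsup Ω p.1}) := by
      ext p; simp [hS, mem_Ioc, and_assoc]
    rw [this]
    exact h1.inter (h2.inter h3)
  rw [hSeq, Measure.volume_eq_prod, Measure.prod_apply hmeas]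
  have hfib : ∀ θ : ℝ, volume (Prod.mk θ ⁻¹' S) =
      (Ico (0:ℝ) (2 * Real.pi)).indicator
        (fun θ => ENNReal.ofReal (hsup Ω θ - hsup C θ)) θ := by
    intro θ
    by_cases hθ : θ ∈ Ico (0:ℝ) (2 * Real.pi)
    · have hpre : Prod.mk θ ⁻¹' S = Ioc (hsup C θ) (hsup Ω θ) := by
        ext ρ
        simp only [mem_preimage, hS, mem_setOf_eq]
        exact and_iff_right hθ
      rw [hpre, Real.volume_Ioc, indicator_of_mem hθ]
    · have hpre : Prod.mk θ ⁻¹' S = ∅ := by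
        ext ρ
        simp only [mem_preimage, hS, mem_setOf_eq, mem_empty_iff_false, iff_false, not_and]
        exact fun h => absurd h hθ
      rw [hpre, indicator_of_notMem hθ]
      simp
  simp_rw [hfib]
  rw [lintegral_indicator measurableSet_Ico]
  have hint : IntegrableOn (fun θ => hsup Ω θ - hsup C θ) (Ico (0:ℝ) (2 * Real.pi)) volume :=
    ((hΩcont.sub hCcont).integrableOn_Icc).mono_set Ico_subset_Icc_self
  have hnn : 0 ≤ᵐ[volume.restrict (Ico (0:ℝ) (2 * Real.pi))]
      (fun θ => hsup Ω θ - hsup C θ) :=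
    Filter.Eventually.of_forall (fun θ => sub_nonneg.mpr (hmono θ))
  rw [← ofReal_integral_eq_lintegral_ofReal hint hnn]
  congr 1
  have h2π : (0:ℝ) ≤ 2 * Real.pi := by positivity
  have hPΩ : P Ω = ∫ θ in (0:ℝ)..(2 * Real.pi), hsup Ω θ := rfl
  have hPC : P C = ∫ θ in (0:ℝ)..(2 * Real.pi), hsup C θ := rfl
  rw [hPΩ, hPC, ← intervalIntegral.integral_sub
    (hΩcont.intervalIntegrable 0 (2 * Real.pi)) (hCcont.intervalIntegrable 0 (2 * Real.pi)),
    intervalIntegral.integral_of_le h2π, ← integral_Icc_eq_integral_Ioc,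
    integral_Icc_eq_integral_Ico]
end

section
/- Let K ⊆ ℝ² be a nonempty compact convex set and let s, t ∈ frontier K. Then for every (θ,ρ): there exists a connected set S ⊆ frontier K with s ∈ S, t ∈ S and S ∩ R(θ,ρ) = ∅ if and only if segment ℝ s t ∩ R(θ,ρ) = ∅. (Corollary 3 of the paper specialized to a convex two-route network without inner parts: under the weakest arrangement, the network frontier K and the equivalent single-route network N₀ = l(s,t) are connected or disconnected by a half-plane disaster simultaneously; in particular, if s and t are not in the disaster half-plane then some boundary arc of K joining s to t avoids the disaster.) -/
open MeasureTheory Real Set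
open scoped InnerProductSpace

set_option maxHeartbeats 1000000

/-- A nonempty open set in the plane contains a point outside any given segment. -/
lemma exists_mem_open_not_mem_segment (U : Set (EuclideanSpace ℝ (Fin 2)))
    (hU : IsOpen U) (hne : U.Nonempty) (s t : EuclideanSpace ℝ (Fin 2)) :
    ∃ z ∈ U, z ∉ segment ℝ s t := by
  obtain ⟨n, hn0, hstn⟩ : ∃ n : EuclideanSpace ℝ (Fin 2), n ≠ 0 ∧ ⟪t, n⟫_ℝ = ⟪s, n⟫_ℝ := by
    by_cases hst : s = t
    · refine ⟨WithLp.toLp 2 ![1, 0], ?_, by rw [hst]⟩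
      intro h
      have := congrArg (fun v : EuclideanSpace ℝ (Fin 2) => v 0) h
      simp at this
    · refine ⟨WithLp.toLp 2 ![-(t - s) 1, (t - s) 0], ?_, ?_⟩
      · intro h
        have h0 := congrArg (fun v : EuclideanSpace ℝ (Fin 2) => v 0) h
        have h1 := congrArg (fun v : EuclideanSpace ℝ (Fin 2) => v 1) h
        simp at h0 h1
        apply hst
        have : t - s = 0 := by
          ext i
          fin_cases i <;> simp <;> linarith
        have := sub_eq_zero.mp this
        exact this.symm
      · have : ⟪t - s, (WithLp.toLp 2 ![-(t - s) 1, (t - s) 0] : EuclideanSpace ℝ (Fin 2))⟫_ℝ = 0 := by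
          simp [PiLp.inner_apply, Fin.sum_univ_two, RCLike.inner_apply]
          ring
        rw [inner_sub_left] at this
        linarith
  have hseg : ∀ x ∈ segment ℝ s t, ⟪x, n⟫_ℝ = ⟪s, n⟫_ℝ := by
    rintro x ⟨a, b, ha, hb, hab, rfl⟩
    rw [inner_add_left, real_inner_smul_left, real_inner_smul_left, hstn]
    have : a * ⟪s, n⟫_ℝ + b * ⟪s, n⟫_ℝ = (a + b) * ⟪s, n⟫_ℝ := by ring
    rw [this, hab, one_mul]
  obtain ⟨z₀, hz₀⟩ := hne
  by_cases hz₀s : ⟪z₀, n⟫_ℝ = ⟪s, n⟫_ℝ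
  · obtain ⟨ε, hε, hball⟩ := Metric.isOpen_iff.mp hU z₀ hz₀
    have hnn : (0:ℝ) < ‖n‖ := norm_pos_iff.mpr hn0
    refine ⟨z₀ + (ε / (2 * ‖n‖)) • n, hball ?_, fun hmem => ?_⟩
    · rw [Metric.mem_ball, dist_eq_norm]
      have : z₀ + (ε / (2 * ‖n‖)) • n - z₀ = (ε / (2 * ‖n‖)) • n := by abel
      rw [this, norm_smul]
      rw [Real.norm_eq_abs, abs_of_pos (by positivity)]
      rw [div_mul_eq_mul_div, mul_comm (2:ℝ) ‖n‖, ← div_div, mul_div_assoc]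
      rw [div_self (ne_of_gt hnn)]
      linarith
    · have := hseg _ hmem
      rw [inner_add_left, real_inner_smul_left, hz₀s, real_inner_self_eq_norm_sq] at this
      have hne' : (0:ℝ) < ε / (2 * ‖n‖) * ‖n‖ ^ 2 := by positivity
      linarith
  · exact ⟨z₀, hz₀, fun hmem => hz₀s (hseg _ hmem)⟩

/-- Radial projection of the segment `[s,t]` from an interior point `z` onto the
frontier of a compact convex set gives a connected subset of the frontier joining
`s` and `t`, consisting of points `z + r • (w - z)` with `r ≥ 1`, `w ∈ [s,t]`. -/
lemma aux_path {K : Set (EuclideanSpace ℝ (Fin 2))}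
    (hKc : IsCompact K) (hKconv : Convex ℝ K)
    {s t z : EuclideanSpace ℝ (Fin 2)} (hs : s ∈ frontier K) (ht : t ∈ frontier K)
    (hz : z ∈ interior K) (hzseg : z ∉ segment ℝ s t) :
    ∃ S : Set (EuclideanSpace ℝ (Fin 2)), S ⊆ frontier K ∧ IsConnected S ∧ s ∈ S ∧ t ∈ S ∧
      ∀ y ∈ S, ∃ w ∈ segment ℝ s t, ∃ r : ℝ, 1 ≤ r ∧ y = z + r • (w - z) := by
  set D : Set (EuclideanSpace ℝ (Fin 2)) := (fun x => z + x) ⁻¹' K with hD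
  have hDconv : Convex ℝ D := hKconv.translate_preimage_right z
  have hD0 : D ∈ nhds 0 := by
    have h1 : (fun x : EuclideanSpace ℝ (Fin 2) => z + x) ⁻¹' (interior K) ∈ nhds 0 := by
      refine IsOpen.mem_nhds (isOpen_interior.preimage (by continuity)) ?_
      simpa using hz
    exact Filter.mem_of_superset h1 (preimage_mono interior_subset)
  have habs : Absorbent ℝ D := absorbent_nhds_zero hD0
  have hDb : Bornology.IsVonNBounded ℝ D := by
    rw [NormedSpace.isVonNBounded_iff]
    obtain ⟨C, hC⟩ := hKc.isBounded.subset_closedBall 0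
    refine (Metric.isBounded_closedBall (x := (0 : EuclideanSpace ℝ (Fin 2)))
      (r := C + ‖z‖)).subset ?_
    intro x hx
    have h2 := hC hx
    rw [Metric.mem_closedBall, dist_eq_norm, sub_zero] at h2 ⊢
    calc ‖x‖ = ‖z + x - z‖ := by rw [add_sub_cancel_left]
    _ ≤ ‖z + x‖ + ‖z‖ := norm_sub_le _ _
    _ ≤ C + ‖z‖ := by linarith
  have hfront : ∀ x, x ∈ frontier K ↔ gauge D (x - z) = 1 := by
    intro x
    rw [gauge_eq_one_iff_mem_frontier hDconv hD0]
    have h3 : frontier D = (Homeomorph.addLeft z) ⁻¹' frontier K :=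
      ((Homeomorph.addLeft z).preimage_frontier K).symm
    rw [h3]
    simp [Homeomorph.addLeft]
  set w : ℝ → EuclideanSpace ℝ (Fin 2) := fun l => s + l • (t - s) with hw
  have hwseg : ∀ l ∈ Icc (0:ℝ) 1, w l ∈ segment ℝ s t := by
    intro l hl
    rw [segment_eq_image']
    exact ⟨l, hl, rfl⟩
  have hsK : s ∈ K := hKc.isClosed.frontier_subset hs
  have htK : t ∈ K := hKc.isClosed.frontier_subset ht
  have hsegK : segment ℝ s t ⊆ K := hKconv.segment_subset hsK htK
  have hvne : ∀ l ∈ Icc (0:ℝ) 1, w l - z ≠ 0 := by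
    intro l hl h
    exact hzseg ((sub_eq_zero.mp h) ▸ hwseg l hl)
  have hgpos : ∀ l ∈ Icc (0:ℝ) 1, 0 < gauge D (w l - z) := fun l hl =>
    (gauge_pos habs hDb).mpr (hvne l hl)
  have hgle : ∀ l ∈ Icc (0:ℝ) 1, gauge D (w l - z) ≤ 1 := by
    intro l hl
    refine gauge_le_one_of_mem ?_
    show z + (w l - z) ∈ K
    rw [add_sub_cancel]
    exact hsegK (hwseg l hl)
  set q : ℝ → EuclideanSpace ℝ (Fin 2) :=
    fun l => z + (gauge D (w l - z))⁻¹ • (w l - z) with hq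
  have hcont : ContinuousOn q (Icc 0 1) := by
    have hgc : Continuous (gauge D) := continuous_gauge hDconv hD0
    have hwc : Continuous (fun l : ℝ => w l - z) := by
      simp only [hw]; continuity
    refine continuousOn_const.add (ContinuousOn.fun_smul ?_ hwc.continuousOn)
    exact ContinuousOn.inv₀ (hgc.comp hwc).continuousOn
      (fun l hl => ne_of_gt (hgpos l hl))
  have hqf : ∀ l ∈ Icc (0:ℝ) 1, q l ∈ frontier K := by
    intro l hl
    rw [hfront]
    have h4 : q l - z = (gauge D (w l - z))⁻¹ • (w l - z) := by
      simp [hq]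
    rw [h4, gauge_smul_of_nonneg (le_of_lt (inv_pos.mpr (hgpos l hl)))]
    simp only [smul_eq_mul]
    exact inv_mul_cancel₀ (ne_of_gt (hgpos l hl))
  have hq0 : q 0 = s := by
    have hws : w 0 = s := by simp [hw]
    have h5 : gauge D (s - z) = 1 := (hfront s).mp hs
    simp only [hq]
    rw [hws, h5, inv_one, one_smul, add_sub_cancel]
  have hq1 : q 1 = t := by
    have hwt : w 1 = t := by simp [hw]
    have h5 : gauge D (t - z) = 1 := (hfront t).mp ht
    simp only [hq]
    rw [hwt, h5, inv_one, one_smul, add_sub_cancel]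
  refine ⟨q '' Icc 0 1, ?_, ?_, ?_, ?_, ?_⟩
  · rintro y ⟨l, hl, rfl⟩
    exact hqf l hl
  · exact (isConnected_Icc zero_le_one).image q hcont
  · exact ⟨0, ⟨le_refl 0, zero_le_one⟩, hq0⟩
  · exact ⟨1, ⟨zero_le_one, le_refl 1⟩, hq1⟩
  · rintro y ⟨l, hl, rfl⟩
    exact ⟨w l, hwseg l hl, (gauge D (w l - z))⁻¹,
      (one_le_inv₀ (hgpos l hl)).mpr (hgle l hl), rfl⟩

/-- Corollary 3 of the paper for a convex two-route network without inner parts: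
the boundary network `frontier K` and the equivalent single-route network
`N₀ = l(s,t)` are connected or disconnected by a half-plane disaster simultaneously. -/
theorem stmt_13 (K : Set (EuclideanSpace ℝ (Fin 2)))
    (hKc : IsCompact K) (hKconv : Convex ℝ K) (hKne : K.Nonempty)
    (s t : EuclideanSpace ℝ (Fin 2)) (hs : s ∈ frontier K) (ht : t ∈ frontier K)
    (θ ρ : ℝ) :
    (∃ S : Set (EuclideanSpace ℝ (Fin 2)), S ⊆ frontier K ∧ IsConnected S ∧
        s ∈ S ∧ t ∈ S ∧ S ∩ R θ ρ = ∅)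
      ↔ segment ℝ s t ∩ R θ ρ = ∅ := by
  have hsK : s ∈ K := hKc.isClosed.frontier_subset hs
  have htK : t ∈ K := hKc.isClosed.frontier_subset ht
  constructor
  · rintro ⟨S, hSsub, hScon, hsS, htS, hSR⟩
    have hnotR : ∀ x ∈ S, ⟪x, u θ⟫_ℝ < ρ := by
      intro x hx
      by_contra h
      push_neg at h
      have hmem : x ∈ S ∩ R θ ρ := ⟨hx, h⟩
      rw [hSR] at hmem
      exact hmem
    have hfs := hnotR s hsS
    have hft := hnotR t htS
    rw [eq_empty_iff_forall_notMem]
    rintro x ⟨⟨a, b, ha, hb, hab, rfl⟩, hxR⟩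
    have hxR' : ρ ≤ ⟪a • s + b • t, u θ⟫_ℝ := hxR
    rw [inner_add_left, real_inner_smul_left, real_inner_smul_left] at hxR'
    have hA := mul_le_mul_of_nonneg_left (le_of_lt hfs) ha
    have hB := mul_le_mul_of_nonneg_left (le_of_lt hft) hb
    have hsum : a * ρ + b * ρ = ρ := by rw [← add_mul, hab, one_mul]
    have hab0 : a = 0 ∨ 0 < a := ha.eq_or_lt.imp Eq.symm id
    rcases hab0 with h0 | h0
    · have hb1 : b = 1 := by linarith
      rw [h0, hb1] at hxR'
      linarith
    · have hA' := mul_lt_mul_of_pos_left hfs h0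
      linarith
  · intro hseg
    have hmem : ∀ w ∈ segment ℝ s t, ⟪w, u θ⟫_ℝ < ρ := by
      intro w hw
      by_contra h
      push_neg at h
      have hm : w ∈ segment ℝ s t ∩ R θ ρ := ⟨hw, h⟩
      rw [hseg] at hm
      exact hm
    have hfs := hmem s (left_mem_segment ℝ s t)
    have hft := hmem t (right_mem_segment ℝ s t)
    by_cases hint : (interior K).Nonempty
    · -- nondegenerate case
      set c := max ⟪s, u θ⟫_ℝ ⟪t, u θ⟫_ℝ with hc
      have hcρ : c < ρ := max_lt hfs hft
      have hsegc : ∀ w ∈ segment ℝ s t, ⟪w, u θ⟫_ℝ ≤ c := by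
        rintro w ⟨a, b, ha, hb, hab, rfl⟩
        rw [inner_add_left, real_inner_smul_left, real_inner_smul_left]
        have h1 : ⟪s, u θ⟫_ℝ ≤ c := le_max_left _ _
        have h2 : ⟪t, u θ⟫_ℝ ≤ c := le_max_right _ _
        have hA := mul_le_mul_of_nonneg_left h1 ha
        have hB := mul_le_mul_of_nonneg_left h2 hb
        have hsum : a * c + b * c = c := by rw [← add_mul, hab, one_mul]
        linarith
      by_cases hM : ∃ x ∈ K, c < ⟪x, u θ⟫_ℝ
      · obtain ⟨x₀, hx₀K, hx₀⟩ := hM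
        obtain ⟨z₀, hz₀⟩ := hint
        -- find an interior point with f > c
        set δ : ℝ := ⟪z₀, u θ⟫_ℝ - ⟪x₀, u θ⟫_ℝ with hδ
        set d : ℝ := ⟪x₀, u θ⟫_ℝ - c with hd'
        have hd : 0 < d := by simp only [hd']; linarith
        set μ : ℝ := min 1 (d / (|δ| + 1)) with hμ
        have hμpos : 0 < μ := lt_min one_pos (by positivity)
        have hμ1 : μ ≤ 1 := min_le_left _ _
        have hμle : μ ≤ d / (|δ| + 1) := min_le_right _ _
        set z₁ := x₀ + μ • (z₀ - x₀) with hz₁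
        have hz₁I : z₁ ∈ interior K :=
          hKconv.add_smul_sub_mem_interior hx₀K hz₀ ⟨hμpos, hμ1⟩
        have hz₁f : c < ⟪z₁, u θ⟫_ℝ := by
          have he : ⟪z₁, u θ⟫_ℝ = ⟪x₀, u θ⟫_ℝ + μ * δ := by
            simp only [hz₁, hδ]
            rw [inner_add_left, real_inner_smul_left, inner_sub_left]
          have habs1 : -|δ| ≤ δ := neg_abs_le δ
          have h1 : μ * (-|δ|) ≤ μ * δ := mul_le_mul_of_nonneg_left habs1 hμpos.le
          have h2 : μ * |δ| ≤ d / (|δ| + 1) * |δ| :=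
            mul_le_mul_of_nonneg_right hμle (abs_nonneg δ)
          have h3 : d / (|δ| + 1) * |δ| < d := by
            rw [div_mul_eq_mul_div, div_lt_iff₀ (by positivity)]
            nlinarith [abs_nonneg δ]
          have hdd : ⟪x₀, u θ⟫_ℝ = c + d := by rw [hd']; ring
          rw [he]
          linarith
        set U := interior K ∩ {x : EuclideanSpace ℝ (Fin 2) | c < ⟪x, u θ⟫_ℝ} with hU
        have hUopen : IsOpen U :=
          isOpen_interior.inter (isOpen_lt continuous_const
            (Continuous.inner continuous_id continuous_const))
        obtain ⟨z, hzU, hzseg⟩ :=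
          exists_mem_open_not_mem_segment U hUopen ⟨z₁, hz₁I, hz₁f⟩ s t
        obtain ⟨S, h1, h2, h3, h4, h5⟩ := aux_path hKc hKconv hs ht hzU.1 hzseg
        refine ⟨S, h1, h2, h3, h4, ?_⟩
        rw [eq_empty_iff_forall_notMem]
        rintro y ⟨hyS, hyR⟩
        obtain ⟨w, hw, r, hr, rfl⟩ := h5 y hyS
        have hfw : ⟪w, u θ⟫_ℝ ≤ c := hsegc w hw
        have hfz : c < ⟪z, u θ⟫_ℝ := hzU.2
        have hyR' : ρ ≤ ⟪z + r • (w - z), u θ⟫_ℝ := hyR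
        rw [inner_add_left, real_inner_smul_left, inner_sub_left] at hyR'
        nlinarith [mul_nonneg (sub_nonneg.mpr hr)
          (sub_nonneg.mpr (le_of_lt (lt_of_le_of_lt hfw hfz)))]
      · push_neg at hM
        obtain ⟨z, hzI, hzseg⟩ :=
          exists_mem_open_not_mem_segment (interior K) isOpen_interior hint s t
        obtain ⟨S, h1, h2, h3, h4, _⟩ := aux_path hKc hKconv hs ht hzI hzseg
        refine ⟨S, h1, h2, h3, h4, ?_⟩
        rw [eq_empty_iff_forall_notMem]
        rintro y ⟨hyS, hyR⟩
        have hyK : y ∈ K := hKc.isClosed.frontier_subset (h1 hyS)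
        have : ⟪y, u θ⟫_ℝ < ρ := lt_of_le_of_lt (hM y hyK) hcρ
        exact absurd hyR (not_le.mpr this)
    · -- degenerate case : K has empty interior, frontier K = K
      have hfr : frontier K = K := by
        rw [hKc.isClosed.frontier_eq, not_nonempty_iff_eq_empty.mp hint, diff_empty]
      refine ⟨segment ℝ s t, ?_, ?_, left_mem_segment ℝ s t, right_mem_segment ℝ s t, hseg⟩
      · rw [hfr]
        exact hKconv.segment_subset hsK htK
      · exact (convex_segment s t).isConnected ⟨s, left_mem_segment ℝ s t⟩
end
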